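/- Let N ≥ 1, let H be an N × N real symmetric positive definite matrix with orthonormal eigenbasis u_1, …, u_N and eigenvalues λ_1, …, λ_N > 0, and let C be an N × N real symmetric positive semidefinite matrix. Fix an index k and set C_kk = u_kᵀ C u_k, A = λ_k·(Tr(H C) − λ_k·C_kk) and B = (N − 1)·λ_k²·C_kk. Then for every real number s lying between A and B (i.e. min(A,B) ≤ s ≤ max(A,B)) there exists an N × N real matrix Ψ such that (1/N)·Ψ Ψᵀ = H and u_kᵀ · Σ(C) · u_k = s, where Σ(C) = (1/N)·Σ_{i=1}^N (Ψ_iᵀ C Ψ_i)·Ψ_i Ψ_iᵀ − H C H and Ψ_i denotes the i-th column of Ψ. -/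

import Mathlib

open Matrix

/-- The mini-batch SGD gradient-noise covariance associated to a Jacobian `Ψ`,
Hessian `H` and second-moment matrix `C`:
`Σ(C) = (1/N)·Σ_i (Ψ_iᵀ C Ψ_i)·Ψ_i Ψ_iᵀ − HCH`, where `Ψ_i` is the `i`-th column. -/
noncomputable def noiseCov (N : ℕ) (H C Ψ : Matrix (Fin N) (Fin N) ℝ) :
    Matrix (Fin N) (Fin N) ℝ :=
  (N : ℝ)⁻¹ • ∑ i : Fin N,
      ((fun j => Ψ j i) ⬝ᵥ C.mulVec fun j => Ψ j i) •
        vecMulVec (fun j => Ψ j i) (fun j => Ψ j i)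
    - H * C * H

private lemma sum3_comm {n : ℕ} (F : Fin n → Fin n → Fin n → ℝ) :
    (∑ a : Fin n, ∑ b : Fin n, ∑ i : Fin n, F a b i) = ∑ i, ∑ a, ∑ b, F a b i := by
  rw [show (∑ a : Fin n, ∑ b : Fin n, ∑ i : Fin n, F a b i)
      = ∑ a : Fin n, ∑ i : Fin n, ∑ b : Fin n, F a b i from
    Finset.sum_congr rfl fun a _ => Finset.sum_comm]
  exact Finset.sum_comm

private lemma sum4_perm {n : ℕ} (F : Fin n → Fin n → Fin n → Fin n → ℝ) :
    (∑ a : Fin n, ∑ b : Fin n, ∑ l : Fin n, ∑ j : Fin n, F a b l j)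
      = ∑ j, ∑ l, ∑ a, ∑ b, F a b l j := by
  rw [show (∑ a : Fin n, ∑ b : Fin n, ∑ l : Fin n, ∑ j : Fin n, F a b l j)
      = ∑ a : Fin n, ∑ j : Fin n, ∑ b : Fin n, ∑ l : Fin n, F a b l j from
    Finset.sum_congr rfl fun a _ => sum3_comm _]
  rw [Finset.sum_comm]
  exact Finset.sum_congr rfl fun j _ => sum3_comm _

private lemma sum_vecMulVec_dot {n : ℕ} (v w : Fin n → ℝ) (q : Fin n → ℝ) (ψ : Fin n → Fin n → ℝ) :
    v ⬝ᵥ (∑ i, q i • Matrix.vecMulVec (ψ i) (ψ i)).mulVec w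
      = ∑ i, q i * (v ⬝ᵥ ψ i) * (ψ i ⬝ᵥ w) := by
  simp only [Matrix.mulVec, dotProduct, Matrix.sum_apply, Matrix.smul_apply,
    Matrix.vecMulVec_apply, smul_eq_mul, Finset.mul_sum, Finset.sum_mul]
  rw [sum3_comm]
  refine Finset.sum_congr rfl fun i _ => ?_
  rw [Finset.sum_comm]
  exact Finset.sum_congr rfl fun a _ =>
    Finset.sum_congr rfl fun b _ => by ring

private lemma dot_mulVec_basis {N : ℕ} (u : Fin N → Fin N → ℝ)
    (horth : ∀ k l, u k ⬝ᵥ u l = if k = l then 1 else 0)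
    (m : Fin N) (c : Fin N → ℝ) :
    u m ⬝ᵥ (Matrix.of (fun i j => u j i)).mulVec c = c m := by
  simp only [Matrix.mulVec, dotProduct, Matrix.of_apply, Finset.mul_sum]
  rw [Finset.sum_comm]
  have key : ∀ p : Fin N, ∑ j, u m j * (u p j * c p) = (if m = p then 1 else 0) * c p := by
    intro p
    rw [show (∑ j, u m j * (u p j * c p)) = (∑ j, u m j * u p j) * c p by
      rw [Finset.sum_mul]; exact Finset.sum_congr rfl fun j _ => by ring]
    rw [← dotProduct, horth m p]
  rw [Finset.sum_congr rfl fun p _ => key p]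
  simp

private lemma quad_mulVec_basis {N : ℕ} (C : Matrix (Fin N) (Fin N) ℝ)
    (u : Fin N → Fin N → ℝ) (c : Fin N → ℝ) :
    ((Matrix.of (fun i j => u j i)).mulVec c) ⬝ᵥ C.mulVec ((Matrix.of (fun i j => u j i)).mulVec c)
      = ∑ j, ∑ l, c j * c l * (u j ⬝ᵥ C.mulVec (u l)) := by
  simp only [Matrix.mulVec, dotProduct, Matrix.of_apply, Finset.mul_sum, Finset.sum_mul]
  rw [sum4_perm (fun a b l j => u j a * c j * (C a b * (u l b * c l)))]
  exact Finset.sum_congr rfl fun j _ => Finset.sum_congr rfl fun l _ =>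
    Finset.sum_congr rfl fun a _ => Finset.sum_congr rfl fun b _ => by ring


private lemma UtCU_apply {N : ℕ} (C : Matrix (Fin N) (Fin N) ℝ) (u : Fin N → Fin N → ℝ)
    (j l : Fin N) :
    ((Matrix.of (fun i j => u j i))ᵀ * (C * Matrix.of (fun i j => u j i))) j l
      = u j ⬝ᵥ C.mulVec (u l) := by
  simp only [Matrix.mul_apply, Matrix.transpose_apply, Matrix.of_apply, dotProduct,
    Matrix.mulVec, Finset.sum_mul, Finset.mul_sum]

private lemma noise_formula
    (N : ℕ) (H C : Matrix (Fin N) (Fin N) ℝ)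
    (hHsymm : H.IsSymm)
    (u : Fin N → Fin N → ℝ) (lam : Fin N → ℝ)
    (horth : ∀ k l, u k ⬝ᵥ u l = if k = l then 1 else 0)
    (heig : ∀ k, H.mulVec (u k) = lam k • u k)
    (hlam : ∀ k, 0 ≤ lam k) (hN0 : (N:ℝ) ≠ 0)
    (k : Fin N) (R : Matrix (Fin N) (Fin N) ℝ) :
    u k ⬝ᵥ (noiseCov N H C
        (Matrix.of (fun i j => u j i) * Matrix.diagonal (fun m => Real.sqrt ((N:ℝ) * lam m)) * R)).mulVec (u k)
      = lam k * ∑ i, (R k i)^2 *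
          (∑ j, ∑ l, (Real.sqrt ((N:ℝ)*lam j) * R j i) * (Real.sqrt ((N:ℝ)*lam l) * R l i)
            * (u j ⬝ᵥ C.mulVec (u l)))
        - lam k^2 * (u k ⬝ᵥ C.mulVec (u k)) := by
  have hcol : ∀ i : Fin N, (fun j => (Matrix.of (fun i j => u j i) * Matrix.diagonal (fun m => Real.sqrt ((N:ℝ) * lam m)) * R) j i)
      = (Matrix.of (fun i j => u j i)).mulVec (fun m => Real.sqrt ((N:ℝ) * lam m) * R m i) := by
    intro i
    funext j
    rw [show (Matrix.of (fun i j => u j i) * Matrix.diagonal (fun m => Real.sqrt ((N:ℝ) * lam m)) * R) j i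
        = ∑ m, (Matrix.of (fun i j => u j i) * Matrix.diagonal (fun m => Real.sqrt ((N:ℝ) * lam m))) j m * R m i
      from Matrix.mul_apply]
    simp only [Matrix.mul_diagonal, Matrix.of_apply, Matrix.mulVec, dotProduct]
    exact Finset.sum_congr rfl fun m _ => by ring
  have hHt : Hᵀ = H := hHsymm
  have hHCH : u k ⬝ᵥ (H * C * H).mulVec (u k) = lam k^2 * (u k ⬝ᵥ C.mulVec (u k)) := by
    rw [← Matrix.mulVec_mulVec, ← Matrix.mulVec_mulVec, heig k, Matrix.mulVec_smul,
      dotProduct_mulVec, ← hHt, Matrix.vecMul_transpose, heig k]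
    rw [smul_dotProduct, dotProduct_smul]
    simp only [smul_eq_mul]; ring
  have huψ : ∀ i, (u k ⬝ᵥ fun j => (Matrix.of (fun i j => u j i) * Matrix.diagonal (fun m => Real.sqrt ((N:ℝ) * lam m)) * R) j i)
      = Real.sqrt ((N:ℝ)*lam k) * R k i := by
    intro i; rw [hcol i]; exact dot_mulVec_basis u horth k _
  have hψu : ∀ i, ((fun j => (Matrix.of (fun i j => u j i) * Matrix.diagonal (fun m => Real.sqrt ((N:ℝ) * lam m)) * R) j i) ⬝ᵥ u k)
      = Real.sqrt ((N:ℝ)*lam k) * R k i := by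
    intro i; rw [dotProduct_comm]; exact huψ i
  have hq : ∀ i, ((fun j => (Matrix.of (fun i j => u j i) * Matrix.diagonal (fun m => Real.sqrt ((N:ℝ) * lam m)) * R) j i)
        ⬝ᵥ C.mulVec (fun j => (Matrix.of (fun i j => u j i) * Matrix.diagonal (fun m => Real.sqrt ((N:ℝ) * lam m)) * R) j i))
      = ∑ j, ∑ l, (Real.sqrt ((N:ℝ)*lam j) * R j i) * (Real.sqrt ((N:ℝ)*lam l) * R l i)
            * (u j ⬝ᵥ C.mulVec (u l)) := by
    intro i; rw [hcol i]; exact quad_mulVec_basis C u _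
  rw [noiseCov, Matrix.sub_mulVec, dotProduct_sub, Matrix.smul_mulVec, dotProduct_smul,
    smul_eq_mul, hHCH, sum_vecMulVec_dot]
  congr 1
  simp only [hq, huψ, hψu]
  have hdk : Real.sqrt ((N:ℝ)*lam k) * Real.sqrt ((N:ℝ)*lam k) = (N:ℝ) * lam k :=
    Real.mul_self_sqrt (mul_nonneg (Nat.cast_nonneg N) (hlam k))
  have hNN : (N:ℝ)⁻¹ * (N:ℝ) = 1 := inv_mul_cancel₀ hN0
  rw [Finset.mul_sum, Finset.mul_sum]
  refine Finset.sum_congr rfl fun i _ => ?_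
  set Q := ∑ j, ∑ l, (Real.sqrt ((N:ℝ)*lam j) * R j i) * (Real.sqrt ((N:ℝ)*lam l) * R l i)
            * (u j ⬝ᵥ C.mulVec (u l)) with hQ
  linear_combination ((N:ℝ)⁻¹ * Q * R k i^2) * hdk + (lam k * Q * R k i ^ 2) * hNN

private def hhM {n : ℕ} (y : Fin n → ℝ) : Matrix (Fin n) (Fin n) ℝ :=
  Matrix.of fun a b => (if a = b then (1:ℝ) else 0) - 2 * y a * y b

private lemma hhM_symm {n : ℕ} (y : Fin n → ℝ) : (hhM y)ᵀ = hhM y := by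
  ext a b
  simp only [hhM, Matrix.transpose_apply, Matrix.of_apply]
  rcases eq_or_ne a b with h | h
  · subst h; ring
  · rw [if_neg h, if_neg (Ne.symm h)]; ring

private lemma hhM_mul_self {n : ℕ} (y : Fin n → ℝ) (hy : y ⬝ᵥ y = 1) :
    hhM y * hhM y = 1 := by
  ext a b
  simp only [hhM, Matrix.mul_apply, Matrix.of_apply, Matrix.one_apply]
  have expand : ∀ i : Fin n,
      ((if a = i then (1:ℝ) else 0) - 2 * y a * y i) * ((if i = b then 1 else 0) - 2 * y i * y b)
        = (if a = i then (1:ℝ) else 0) * (if i = b then 1 else 0)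
          - 2 * y a * (y i * (if i = b then 1 else 0))
          - 2 * y b * (y i * (if a = i then 1 else 0))
          + 4 * (y a * y b) * (y i * y i) := fun i => by ring
  rw [Finset.sum_congr rfl fun i _ => expand i]
  simp only [Finset.sum_add_distrib, Finset.sum_sub_distrib, ← Finset.mul_sum]
  have h1 : ∑ i : Fin n, (if a = i then (1:ℝ) else 0) * (if i = b then 1 else 0)
      = if a = b then 1 else 0 := by
    simp [ite_mul, Finset.sum_ite_eq]
  have h2 : ∑ i : Fin n, y i * (if i = b then (1:ℝ) else 0) = y b := by
    simp [mul_ite, Finset.sum_ite_eq']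
  have h3 : ∑ i : Fin n, y i * (if a = i then (1:ℝ) else 0) = y a := by
    simp [mul_ite, Finset.sum_ite_eq]
  have h4 : ∑ i : Fin n, y i * y i = 1 := hy
  rw [h1, h2, h3, h4]
  ring

private lemma hhM_mul_transpose {n : ℕ} (y : Fin n → ℝ) (hy : y ⬝ᵥ y = 1) :
    hhM y * (hhM y)ᵀ = 1 := by rw [hhM_symm]; exact hhM_mul_self y hy

set_option maxHeartbeats 2000000 in
/-- Attainability of the spectral component `Σ_kk = u_kᵀ Σ(C) u_k`: for fixed `H`
(symmetric positive definite, with orthonormal eigenbasis `u_k` and eigenvalues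
`λ_k > 0`) and fixed symmetric PSD `C`, every value `s` between
`A = λ_k(Tr(HC) − λ_k C_kk)` and `B = (N−1)λ_k² C_kk` is attained by some Jacobian
`Ψ` with `(1/N)ΨΨᵀ = H`. -/
theorem sigma_kk_attainable
    (N : ℕ) (hN : 1 ≤ N)
    (H C : Matrix (Fin N) (Fin N) ℝ)
    (hHsymm : H.IsSymm) (hC : C.PosSemidef)
    (u : Fin N → Fin N → ℝ) (lam : Fin N → ℝ)
    (horth : ∀ k l, u k ⬝ᵥ u l = if k = l then 1 else 0)
    (heig : ∀ k, H.mulVec (u k) = lam k • u k)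
    (hpos : ∀ k, 0 < lam k)
    (k : Fin N)
    (Ckk A B : ℝ)
    (hCkk : Ckk = u k ⬝ᵥ C.mulVec (u k))
    (hA : A = lam k * ((H * C).trace - lam k * Ckk))
    (hB : B = ((N : ℝ) - 1) * lam k ^ 2 * Ckk)
    (s : ℝ) (hs₁ : min A B ≤ s) (hs₂ : s ≤ max A B) :
    ∃ Ψ : Matrix (Fin N) (Fin N) ℝ,
      (N : ℝ)⁻¹ • (Ψ * Ψᵀ) = H ∧
      u k ⬝ᵥ (noiseCov N H C Ψ).mulVec (u k) = s := by
  classical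
  have hNR : (0:ℝ) < (N:ℝ) := by exact_mod_cast Nat.lt_of_lt_of_le Nat.zero_lt_one hN
  have hN0 : (N:ℝ) ≠ 0 := ne_of_gt hNR
  have hsqrtN : (0:ℝ) < Real.sqrt N := Real.sqrt_pos.mpr hNR
  -- the orthogonal eigenbasis matrix
  have hUtU : (Matrix.of (fun i j => u j i))ᵀ * (Matrix.of (fun i j => u j i))
      = (1 : Matrix (Fin N) (Fin N) ℝ) := by
    ext a b
    simp only [Matrix.mul_apply, Matrix.transpose_apply, Matrix.of_apply, Matrix.one_apply]
    rw [show (∑ m, u a m * u b m) = u a ⬝ᵥ u b from rfl, horth a b]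
  have hUUt : (Matrix.of (fun i j => u j i)) * (Matrix.of (fun i j => u j i))ᵀ
      = (1 : Matrix (Fin N) (Fin N) ℝ) := mul_eq_one_comm.mp hUtU
  have hHU : H * (Matrix.of (fun i j => u j i))
      = (Matrix.of (fun i j => u j i)) * Matrix.diagonal lam := by
    ext a b
    rw [Matrix.mul_diagonal]
    simp only [Matrix.mul_apply, Matrix.of_apply]
    have h := congrFun (heig b) a
    simpa [Matrix.mulVec, dotProduct, mul_comm] using h
  have hHdec : (Matrix.of (fun i j => u j i)) * Matrix.diagonal lam
      * (Matrix.of (fun i j => u j i))ᵀ = H := by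
    rw [← hHU, Matrix.mul_assoc, hUUt, Matrix.mul_one]
  have hDD : Matrix.diagonal (fun m => Real.sqrt ((N:ℝ) * lam m))
      * Matrix.diagonal (fun m => Real.sqrt ((N:ℝ) * lam m))
      = (N:ℝ) • Matrix.diagonal lam := by
    have hfun : (fun m => Real.sqrt ((N:ℝ) * lam m) * Real.sqrt ((N:ℝ) * lam m))
        = (N:ℝ) • lam := funext fun m =>
      (Real.mul_self_sqrt (mul_nonneg (le_of_lt hNR) (hpos m).le))
    rw [Matrix.diagonal_mul_diagonal, hfun, Matrix.diagonal_smul]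
  have hPP : ∀ R : Matrix (Fin N) (Fin N) ℝ, R * Rᵀ = 1 →
      (N:ℝ)⁻¹ • ((Matrix.of (fun i j => u j i) * Matrix.diagonal (fun m => Real.sqrt ((N:ℝ) * lam m)) * R)
        * (Matrix.of (fun i j => u j i) * Matrix.diagonal (fun m => Real.sqrt ((N:ℝ) * lam m)) * R)ᵀ) = H := by
    intro R hR
    have hDt : (Matrix.diagonal (fun m => Real.sqrt ((N:ℝ) * lam m)))ᵀ
        = Matrix.diagonal (fun m => Real.sqrt ((N:ℝ) * lam m)) := Matrix.diagonal_transpose _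
    rw [Matrix.transpose_mul, Matrix.transpose_mul, hDt]
    rw [show (Matrix.of (fun i j => u j i) * Matrix.diagonal (fun m => Real.sqrt ((N:ℝ) * lam m)) * R)
        * (Rᵀ * (Matrix.diagonal (fun m => Real.sqrt ((N:ℝ) * lam m)) * (Matrix.of (fun i j => u j i))ᵀ))
      = Matrix.of (fun i j => u j i) * ((Matrix.diagonal (fun m => Real.sqrt ((N:ℝ) * lam m)) * (R * Rᵀ))
          * (Matrix.diagonal (fun m => Real.sqrt ((N:ℝ) * lam m)) * (Matrix.of (fun i j => u j i))ᵀ)) by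
      simp only [Matrix.mul_assoc]]
    rw [hR, Matrix.mul_one]
    rw [show (Matrix.of (fun i j => u j i)) * (Matrix.diagonal (fun m => Real.sqrt ((N:ℝ) * lam m))
        * (Matrix.diagonal (fun m => Real.sqrt ((N:ℝ) * lam m)) * (Matrix.of (fun i j => u j i))ᵀ))
      = Matrix.of (fun i j => u j i) * (Matrix.diagonal (fun m => Real.sqrt ((N:ℝ) * lam m))
        * Matrix.diagonal (fun m => Real.sqrt ((N:ℝ) * lam m))) * (Matrix.of (fun i j => u j i))ᵀ by
      simp only [Matrix.mul_assoc]]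
    rw [hDD, Matrix.mul_smul, Matrix.smul_mul, hHdec, smul_smul, inv_mul_cancel₀ hN0, one_smul]
  -- trace identity
  have htr : (H * C).trace = ∑ j, lam j * (u j ⬝ᵥ C.mulVec (u j)) := by
    conv_lhs => rw [← hHdec]
    rw [Matrix.mul_assoc, Matrix.mul_assoc, Matrix.trace_mul_comm, ← Matrix.mul_assoc]
    rw [show Matrix.diagonal lam * (Matrix.of (fun i j => u j i))ᵀ * C * Matrix.of (fun i j => u j i)
        = Matrix.diagonal lam * ((Matrix.of (fun i j => u j i))ᵀ * (C * Matrix.of (fun i j => u j i))) by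
      simp only [Matrix.mul_assoc]]
    rw [Matrix.trace]
    simp only [Matrix.diag_apply, Matrix.diagonal_mul, UtCU_apply]
  -- the Householder target vector
  obtain ⟨cc, hccdef⟩ : ∃ c : ℝ, c = -(Real.sqrt (N:ℝ))⁻¹ := ⟨_, rfl⟩
  have hccneg : cc < 0 := by
    rw [hccdef]; rw [neg_lt, neg_zero]; positivity
  have hcc2 : cc * cc = (N:ℝ)⁻¹ := by
    rw [hccdef, neg_mul_neg, ← mul_inv, Real.mul_self_sqrt hNR.le]
  have hNcc : (N:ℝ) * (cc * cc) = 1 := by rw [hcc2]; exact mul_inv_cancel₀ hN0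
  obtain ⟨xk, hxkdef⟩ : ∃ x : ℝ, x = Real.sqrt ((1 - cc)/2) := ⟨_, rfl⟩
  have hxkpos : 0 < xk := by rw [hxkdef]; apply Real.sqrt_pos.mpr; linarith
  have hxk2 : xk * xk = (1 - cc)/2 := by rw [hxkdef]; exact Real.mul_self_sqrt (by linarith)
  obtain ⟨vst, hvstdef⟩ : ∃ v : Fin N → ℝ, v = fun i => if i = k then xk else -cc/(2*xk) := ⟨_, rfl⟩
  have hvstk : vst k = xk := by rw [hvstdef]; simp
  have hvv : vst ⬝ᵥ vst = 1 := by
    rw [dotProduct]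
    have hterm : ∀ i : Fin N, vst i * vst i
        = (if i = k then xk*xk - (-cc/(2*xk))*(-cc/(2*xk)) else 0)
          + (-cc/(2*xk))*(-cc/(2*xk)) := by
      intro i; rw [hvstdef]
      by_cases h : i = k <;> simp [h]
    rw [Finset.sum_congr rfl fun i _ => hterm i, Finset.sum_add_distrib,
      Finset.sum_ite_eq' Finset.univ k, Finset.sum_const, Finset.card_univ, Fintype.card_fin]
    simp only [Finset.mem_univ, if_true, nsmul_eq_mul]
    have hxkne : xk ≠ 0 := ne_of_gt hxkpos
    field_simp
    ring_nf
    nlinarith [hxk2, hNcc, hcc2]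
  -- the path
  obtain ⟨ek, hekdef⟩ : ∃ e : Fin N → ℝ, e = fun i => if i = k then (1:ℝ) else 0 := ⟨_, rfl⟩
  obtain ⟨vv, hvvdef⟩ : ∃ w : ℝ → Fin N → ℝ, w = fun t i => (1-t) * ek i + t * vst i := ⟨_, rfl⟩
  obtain ⟨nt, hntdef⟩ : ∃ n : ℝ → ℝ, n = fun t => ∑ i, vv t i * vv t i := ⟨_, rfl⟩
  have hnt_eq : ∀ t, nt t = (1-t)^2 + (2*(t*(1-t)))*xk + t^2 := by
    intro t
    rw [hntdef]
    simp only []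
    have hterm : ∀ i : Fin N, vv t i * vv t i
        = (1-t)^2 * (ek i * ek i) + (2*(t*(1-t))) * (ek i * vst i) + t^2 * (vst i * vst i) :=
      fun i => by rw [hvvdef]; ring
    rw [Finset.sum_congr rfl fun i _ => hterm i, Finset.sum_add_distrib, Finset.sum_add_distrib,
      ← Finset.mul_sum, ← Finset.mul_sum, ← Finset.mul_sum]
    have h1 : ∑ i : Fin N, ek i * ek i = 1 := by
      rw [hekdef]
      simp
    have h2 : ∑ i : Fin N, ek i * vst i = xk := by
      rw [hekdef]
      simp [hvstk]
    have h3 : ∑ i : Fin N, vst i * vst i = 1 := hvv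
    rw [h1, h2, h3]; ring
  have hntpos : ∀ t ∈ Set.Icc (0:ℝ) 1, 0 < nt t := by
    intro t ht
    rw [hnt_eq]
    have h0 : 0 ≤ t := ht.1
    have h1 : t ≤ 1 := ht.2
    have h2 : 0 ≤ (2*(t*(1-t)))*xk :=
      mul_nonneg (mul_nonneg (by norm_num) (mul_nonneg h0 (by linarith))) hxkpos.le
    nlinarith [sq_nonneg (1 - 2*t)]
  obtain ⟨xx, hxxdef⟩ : ∃ x : ℝ → Fin N → ℝ, x = fun t i => (Real.sqrt (nt t))⁻¹ * vv t i := ⟨_, rfl⟩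
  have hxxunit : ∀ t ∈ Set.Icc (0:ℝ) 1, xx t ⬝ᵥ xx t = 1 := by
    intro t ht
    have ha := hntpos t ht
    have hs := Real.sqrt_pos.mpr ha
    rw [dotProduct]
    have hterm : ∀ i : Fin N, xx t i * xx t i
        = ((Real.sqrt (nt t))⁻¹ * (Real.sqrt (nt t))⁻¹) * (vv t i * vv t i) :=
      fun i => by rw [hxxdef]; ring
    rw [Finset.sum_congr rfl fun i _ => hterm i, ← Finset.mul_sum]
    rw [show (∑ i, vv t i * vv t i) = nt t from (congrFun hntdef t).symm]
    rw [← mul_inv, Real.mul_self_sqrt ha.le]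
    exact inv_mul_cancel₀ (ne_of_gt ha)
  have hnt0 : nt 0 = 1 := by rw [hnt_eq]; ring
  have hnt1 : nt 1 = 1 := by rw [hnt_eq]; ring
  have hxx0 : xx 0 = ek := by
    funext i
    rw [hxxdef]
    simp only [hnt0, Real.sqrt_one, inv_one, one_mul, hvvdef]
    ring
  have hxx1 : xx 1 = vst := by
    funext i
    rw [hxxdef]
    simp only [hnt1, Real.sqrt_one, inv_one, one_mul, hvvdef]
    ring
  -- continuity
  have hvvc : ∀ i, Continuous fun t => vv t i := by
    intro i
    simp only [hvvdef]
    fun_prop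
  have hntc : Continuous nt := by
    rw [hntdef]
    exact continuous_finset_sum _ fun i _ => (hvvc i).mul (hvvc i)
  have hxxc : ∀ i, ContinuousOn (fun t => xx t i) (Set.Icc (0:ℝ) 1) := by
    intro i
    simp only [hxxdef]
    exact ((Real.continuous_sqrt.comp hntc).continuousOn.inv₀
      (fun t ht => ne_of_gt (Real.sqrt_pos.mpr (hntpos t ht)))).mul (hvvc i).continuousOn
  -- the value function along the path
  obtain ⟨g, hgdef⟩ : ∃ g : ℝ → ℝ, g = fun t => lam k * ∑ i, ((hhM (xx t)) k i)^2 *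
      (∑ j, ∑ l, (Real.sqrt ((N:ℝ)*lam j) * (hhM (xx t)) j i)
        * (Real.sqrt ((N:ℝ)*lam l) * (hhM (xx t)) l i) * (u j ⬝ᵥ C.mulVec (u l)))
      - lam k^2 * (u k ⬝ᵥ C.mulVec (u k)) := ⟨_, rfl⟩
  have hhc : ∀ a b : Fin N, ContinuousOn (fun t => (hhM (xx t)) a b) (Set.Icc (0:ℝ) 1) := by
    intro a b
    simp only [hhM, Matrix.of_apply]
    exact continuousOn_const.sub ((continuousOn_const.mul (hxxc a)).mul (hxxc b))
  have hgc : ContinuousOn g (Set.Icc (0:ℝ) 1) := by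
    rw [hgdef]
    apply ContinuousOn.sub _ continuousOn_const
    apply ContinuousOn.mul continuousOn_const
    apply continuousOn_finset_sum
    intro i _
    refine ContinuousOn.mul ((hhc k i).pow 2) ?_
    apply continuousOn_finset_sum
    intro j _
    apply continuousOn_finset_sum
    intro l _
    exact ((continuousOn_const.mul (hhc j i)).mul (continuousOn_const.mul (hhc l i))).mul
      continuousOn_const
    -- entries of the Householder matrix at the start point
  have he : ∀ a b : Fin N, hhM ek a b = if a = b then (if a = k then (-1:ℝ) else 1) else 0 := by
    intro a b
    simp only [hhM, Matrix.of_apply, hekdef]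
    split_ifs <;> simp_all <;> norm_num
  have hg0 : g 0 = B := by
    rw [hgdef]
    simp only [hxx0]
    have hQ : ∀ i : Fin N, (∑ j, ∑ l, (Real.sqrt ((N:ℝ)*lam j) * (hhM ek) j i)
        * (Real.sqrt ((N:ℝ)*lam l) * (hhM ek) l i) * (u j ⬝ᵥ C.mulVec (u l)))
        = ((N:ℝ)*lam i) * (u i ⬝ᵥ C.mulVec (u i)) := by
      intro i
      have hterm : ∀ j l : Fin N,
          (Real.sqrt ((N:ℝ)*lam j) * (hhM ek) j i) * (Real.sqrt ((N:ℝ)*lam l) * (hhM ek) l i)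
            * (u j ⬝ᵥ C.mulVec (u l))
          = if l = i then (if j = i then
              (Real.sqrt ((N:ℝ)*lam i) * Real.sqrt ((N:ℝ)*lam i))
              * (((if i = k then (-1:ℝ) else 1)) * ((if i = k then (-1:ℝ) else 1)))
              * (u i ⬝ᵥ C.mulVec (u i)) else 0) else 0 := by
        intro j l
        rw [he j i, he l i]
        by_cases hl : l = i
        · subst hl
          by_cases hj : j = l
          · subst hj; simp
          · simp [hj]
        · simp [hl]
      rw [Finset.sum_congr rfl fun j _ => Finset.sum_congr rfl fun l _ => hterm j l]
      simp only [Finset.sum_ite_eq', Finset.mem_univ, if_true, Finset.sum_const_zero,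
        Finset.sum_ite_eq]
      rw [Real.mul_self_sqrt (mul_nonneg hNR.le (hpos i).le)]
      by_cases hik : i = k <;> simp [hik]
    have houter : ∀ i : Fin N, ((hhM ek) k i)^2 = if i = k then (1:ℝ) else 0 := by
      intro i
      rw [he k i]
      by_cases hik : k = i
      · subst hik; simp
      · simp [hik, Ne.symm hik]
    rw [Finset.sum_congr rfl fun i _ => by rw [houter i, hQ i]]
    simp only [ite_mul, one_mul, zero_mul, Finset.sum_ite_eq', Finset.mem_univ, if_true]
    rw [hB, hCkk]
    ring
  -- the end point
  have hrow : ∀ i, hhM vst k i = cc := by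
    intro i
    simp only [hhM, Matrix.of_apply, hvstdef]
    by_cases hik : k = i
    · subst hik
      simp only [eq_self_iff_true, if_true]
      linear_combination (-2 : ℝ) * hxk2
    · rw [if_neg hik, if_neg (Ne.symm hik)]
      simp only [eq_self_iff_true, if_true]
      field_simp
      ring
  have hRRT : hhM vst * (hhM vst)ᵀ = 1 := hhM_mul_transpose vst hvv
  have hinner : ∀ j l : Fin N, (∑ i, (hhM vst) j i * (hhM vst) l i) = if j = l then (1:ℝ) else 0 := by
    intro j l
    have hjl := congrFun (congrFun hRRT j) l
    simpa [Matrix.mul_apply, Matrix.transpose_apply, Matrix.one_apply] using hjl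
  have hg1 : g 1 = A := by
    rw [hgdef]
    simp only [hxx1]
    rw [Finset.sum_congr rfl fun i _ => by rw [hrow i]]
    rw [← Finset.mul_sum]
    rw [← sum3_comm (fun j l i => (Real.sqrt ((N:ℝ)*lam j) * (hhM vst) j i)
        * (Real.sqrt ((N:ℝ)*lam l) * (hhM vst) l i) * (u j ⬝ᵥ C.mulVec (u l)))]
    rw [Finset.sum_congr rfl fun j _ => Finset.sum_congr rfl fun l _ => by
      rw [show (∑ i, (Real.sqrt ((N:ℝ)*lam j) * (hhM vst) j i)
          * (Real.sqrt ((N:ℝ)*lam l) * (hhM vst) l i) * (u j ⬝ᵥ C.mulVec (u l)))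
          = (Real.sqrt ((N:ℝ)*lam j) * Real.sqrt ((N:ℝ)*lam l) * (u j ⬝ᵥ C.mulVec (u l)))
            * ∑ i, (hhM vst) j i * (hhM vst) l i by
        rw [Finset.mul_sum]; exact Finset.sum_congr rfl fun i _ => by ring,
        hinner j l]]
    simp only [mul_ite, mul_one, mul_zero, Finset.sum_ite_eq, Finset.mem_univ, if_true]
    rw [Finset.sum_congr rfl fun j _ => by
      rw [Real.mul_self_sqrt (mul_nonneg hNR.le (hpos j).le)]]
    rw [hA, hCkk, htr]
    rw [show (∑ j, ((N:ℝ) * lam j) * (u j ⬝ᵥ C.mulVec (u j)))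
        = (N:ℝ) * ∑ j, lam j * (u j ⬝ᵥ C.mulVec (u j)) by
      rw [Finset.mul_sum]; exact Finset.sum_congr rfl fun j _ => by ring]
    have hcsq : cc^2 = (N:ℝ)⁻¹ := by rw [sq]; exact hcc2
    rw [hcsq]
    field_simp
  -- intermediate value theorem
  have hsmem : s ∈ Set.uIcc (g 0) (g 1) := by
    rw [hg0, hg1]
    rcases le_total A B with h | h
    · exact Set.mem_uIcc.mpr (Or.inr ⟨by rwa [min_eq_left h] at hs₁, by rwa [max_eq_right h] at hs₂⟩)
    · exact Set.mem_uIcc.mpr (Or.inl ⟨by rwa [min_eq_right h] at hs₁, by rwa [max_eq_left h] at hs₂⟩)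
  have hIcc : Set.uIcc (0:ℝ) 1 = Set.Icc 0 1 := Set.uIcc_of_le zero_le_one
  obtain ⟨t₀, ht₀mem, ht₀⟩ := intermediate_value_uIcc (f := g) (a := (0:ℝ)) (b := 1)
    (by rw [hIcc]; exact hgc) hsmem
  rw [hIcc] at ht₀mem
  refine ⟨Matrix.of (fun i j => u j i) * Matrix.diagonal (fun m => Real.sqrt ((N:ℝ)*lam m))
      * hhM (xx t₀),
    hPP _ (hhM_mul_transpose _ (hxxunit t₀ ht₀mem)), ?_⟩
  rw [noise_formula N H C hHsymm u lam horth heig (fun m => (hpos m).le) hN0 k (hhM (xx t₀))]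
  rw [hgdef] at ht₀
  exact ht₀
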